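/- Let B ∈ ℂ^{m×n}, W ∈ ℂ^{n×m}, let k be a natural number with k = ind(BW), let H be the Moore–Penrose inverse of B, and let X be a minimal rank W-weighted weak Drazin inverse of B. Then Y = H·B·W·X·W is the unique matrix Y ∈ ℂ^{n×m} satisfying the three equations Y·B·Y = Y, B·Y = B·W·X·W, and Y·(B·W)^{k+1} = H·(B·W)^{k+1}. -/
import Mathlib


open Matrix

/-- The index of a square complex matrix: the least `j` with `rank (M^j) = rank (M^(j+1))`. -/
noncomputable def matIndex {p : ℕ} (M : Matrix (Fin p) (Fin p) ℂ) : ℕ :=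
  sInf {j : ℕ | (M ^ j).rank = (M ^ (j + 1)).rank}

/-- The column space of a complex matrix: the range of `v ↦ M *ᵥ v`. -/
noncomputable def colSpace {a b : ℕ} (M : Matrix (Fin a) (Fin b) ℂ) :
    Submodule ℂ (Fin a → ℂ) :=
  LinearMap.range M.mulVecLin

/-- The null space of a complex matrix: the kernel of `v ↦ M *ᵥ v`. -/
noncomputable def nullSpace {a b : ℕ} (M : Matrix (Fin a) (Fin b) ℂ) :
    Submodule ℂ (Fin b → ℂ) :=
  LinearMap.ker M.mulVecLin


/-- **Theorem 3.1.** `Y = H·B·W·X·W` is the unique solution of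
`Y·B·Y = Y`, `B·Y = B·W·X·W`, `Y·(B·W)^(k+1) = H·(B·W)^(k+1)`. -/
theorem weighted_weak_MPD_unique {m n : ℕ}
    (B : Matrix (Fin m) (Fin n) ℂ) (W : Matrix (Fin n) (Fin m) ℂ)
    (k : ℕ) (hk : k = matIndex (B * W))
    (H : Matrix (Fin n) (Fin m) ℂ)
    (hH1 : B * H * B = B) (hH2 : H * B * H = H)
    (hH3 : (B * H)ᴴ = B * H) (hH4 : (H * B)ᴴ = H * B)
    (X : Matrix (Fin m) (Fin n) ℂ)
    (hX1 : X * W * (B * W) ^ (k + 1) = (B * W) ^ k)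
    (hX2 : X.rank = ((B * W) ^ k).rank) :
    ∀ Y : Matrix (Fin n) (Fin m) ℂ,
      (Y * B * Y = Y ∧ B * Y = B * W * X * W ∧
        Y * (B * W) ^ (k + 1) = H * (B * W) ^ (k + 1)) ↔
      Y = H * B * W * X * W := by
  -- Abbreviation
  have hA : (B * W) * (B * W) ^ k = (B * W) ^ (k + 1) := (pow_succ' (B * W) k).symm
  -- range of (B*W)^k is contained in range of X
  have hle : LinearMap.range ((B * W) ^ k).mulVecLin ≤ LinearMap.range X.mulVecLin := by
    rintro y ⟨v, rfl⟩
    refine ⟨(W * (B * W) ^ (k + 1)) *ᵥ v, ?_⟩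
    simp only [Matrix.mulVecLin_apply, Matrix.mulVec_mulVec]
    rw [← Matrix.mul_assoc, hX1]
  -- ranges are equal
  have heq : LinearMap.range X.mulVecLin = LinearMap.range ((B * W) ^ k).mulVecLin := by
    refine (Submodule.eq_of_le_of_finrank_le hle ?_).symm
    have h1 : X.rank = Module.finrank ℂ (LinearMap.range X.mulVecLin) := rfl
    have h2 : ((B * W) ^ k).rank
        = Module.finrank ℂ (LinearMap.range ((B * W) ^ k).mulVecLin) := rfl
    omega
  -- factor X through (B*W)^k
  have hmem : ∀ j, X *ᵥ Pi.single j 1 ∈ LinearMap.range ((B * W) ^ k).mulVecLin := by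
    intro j
    rw [← heq]
    exact ⟨Pi.single j 1, rfl⟩
  choose u hu using hmem
  set U : Matrix (Fin m) (Fin n) ℂ := Matrix.of fun i j => u j i with hUdef
  have hXU : X = (B * W) ^ k * U := by
    ext i j
    have h := congrFun (hu j) i
    simp only [Matrix.mulVecLin_apply] at h
    have h2 : (X *ᵥ Pi.single j 1) i = X i j := by
      simp [Matrix.mulVec, dotProduct, Pi.single_apply, mul_ite]
    rw [Matrix.mul_apply, ← h2, ← h]
    simp [Matrix.mulVec, dotProduct, hUdef]
  -- key identities
  have hkey : (B * W) ^ k * U * W * (B * W) ^ (k + 1) = (B * W) ^ k := by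
    rw [← hXU]; exact hX1
  have hQ : B * W * X * W = (B * W) ^ (k + 1) * U * W := by
    rw [hXU, ← hA]; simp only [Matrix.mul_assoc]
  have hkey2 : (B * W) ^ (k + 1) * U * W * (B * W) ^ (k + 1) = (B * W) ^ (k + 1) := by
    calc (B * W) ^ (k + 1) * U * W * (B * W) ^ (k + 1)
        = B * W * ((B * W) ^ k * U * W * (B * W) ^ (k + 1)) := by rw [← hA]; simp only [Matrix.mul_assoc]
      _ = B * W * (B * W) ^ k := by rw [hkey]
      _ = (B * W) ^ (k + 1) := hA
  have hP : (B * W * X * W) * (B * W * X * W) = B * W * X * W := by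
    rw [hQ]
    calc (B * W) ^ (k + 1) * U * W * ((B * W) ^ (k + 1) * U * W)
        = (B * W) ^ (k + 1) * U * W * (B * W) ^ (k + 1) * U * W := by simp only [Matrix.mul_assoc]
      _ = (B * W) ^ (k + 1) * U * W := by rw [hkey2]
  intro Y
  constructor
  · rintro ⟨hY1, hY2, hY3⟩
    calc Y = Y * B * Y := hY1.symm
      _ = Y * (B * Y) := by rw [Matrix.mul_assoc]
      _ = Y * ((B * W) ^ (k + 1) * U * W) := by rw [hY2, hQ]
      _ = Y * (B * W) ^ (k + 1) * (U * W) := by simp only [Matrix.mul_assoc]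
      _ = H * (B * W) ^ (k + 1) * (U * W) := by rw [hY3]
      _ = H * ((B * W) ^ (k + 1) * U * W) := by simp only [Matrix.mul_assoc]
      _ = H * (B * W * X * W) := by rw [hQ]
      _ = H * B * W * X * W := by simp only [Matrix.mul_assoc]
  · rintro rfl
    have hBY : B * (H * B * W * X * W) = B * W * X * W := by
      calc B * (H * B * W * X * W) = B * H * B * (W * X * W) := by simp only [Matrix.mul_assoc]
        _ = B * (W * X * W) := by rw [hH1]
        _ = B * W * X * W := by simp only [Matrix.mul_assoc]
    refine ⟨?_, hBY, ?_⟩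
    · calc H * B * W * X * W * B * (H * B * W * X * W)
          = H * ((B * W * X * W) * (B * (H * B * W * X * W))) := by simp only [Matrix.mul_assoc]
        _ = H * ((B * W * X * W) * (B * W * X * W)) := by rw [hBY]
        _ = H * (B * W * X * W) := by rw [hP]
        _ = H * B * W * X * W := by simp only [Matrix.mul_assoc]
    · calc H * B * W * X * W * (B * W) ^ (k + 1)
          = H * (B * W) * (X * W * (B * W) ^ (k + 1)) := by simp only [Matrix.mul_assoc]
        _ = H * (B * W) * (B * W) ^ k := by rw [hX1]
        _ = H * ((B * W) * (B * W) ^ k) := by rw [Matrix.mul_assoc]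
        _ = H * (B * W) ^ (k + 1) := by rw [hA]
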